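/- The two-stage method Q* = Qⁿ + (Δt/2)L(Qⁿ) + (Δt²/8)∂ₜL(Qⁿ), Qⁿ⁺¹ = Qⁿ + Δt L(Qⁿ) + (Δt²/6)(∂ₜL(Qⁿ) + 2∂ₜL(Q*)) is fourth-order accurate for the ODE dQ/dt = L(Q): if Q is the exact solution with Q(t_n) = Qⁿ, then Qⁿ⁺¹ = Q(t_n + Δt) + O(Δt⁵), provided L is smooth and ∂ₜL is computed via the chain rule ∂ₜL(Q) = L'(Q)·L(Q). -/

import Mathlib

open Asymptotics

private lemma hd_congr {f : ℝ → ℝ} {d d' x : ℝ} (h : HasDerivAt f d x) (he : d' = d) :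
    HasDerivAt f d' x := he ▸ h

lemma isBigO_succ_of_hasDerivAt {f g : ℝ → ℝ} {k : ℕ}
    (hf : ∀ x, HasDerivAt f (g x) x) (hf0 : f 0 = 0)
    (hg : g =O[nhds 0] (fun x => x ^ k)) :
    f =O[nhds 0] (fun x => x ^ (k+1)) := by
  obtain ⟨C, hC⟩ := hg.bound
  rw [Metric.eventually_nhds_iff] at hC
  obtain ⟨ε, hε, hball⟩ := hC
  rw [isBigO_iff]
  refine ⟨|C|, Metric.eventually_nhds_iff.mpr ⟨ε, hε, fun {x} hx => ?_⟩⟩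
  have hsub : ∀ t ∈ Set.uIcc (0:ℝ) x, |t| ≤ |x| := by
    intro t ht
    rcases Set.mem_uIcc.mp ht with ⟨h1, h2⟩ | ⟨h1, h2⟩
    · rw [abs_of_nonneg h1]; exact le_trans h2 (le_abs_self x)
    · rw [abs_of_nonpos h2]; exact le_trans (neg_le_neg h1) (neg_le_abs x)
  have key : ‖f x - f 0‖ ≤ |C| * |x| ^ k * ‖x - 0‖ := by
    apply Convex.norm_image_sub_le_of_norm_hasDerivWithin_le
      (f' := g) (fun t _ => (hf t).hasDerivWithinAt) ?_ (convex_uIcc 0 x)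
      Set.left_mem_uIcc Set.right_mem_uIcc
    intro t ht
    have h1 : dist t 0 < ε := by
      simp only [Real.dist_eq, sub_zero]
      exact lt_of_le_of_lt (hsub t ht) (by simpa [Real.dist_eq, sub_zero] using hx)
    calc ‖g t‖ ≤ C * ‖t ^ k‖ := hball h1
      _ ≤ |C| * |x| ^ k := by
          have h2 : ‖t ^ k‖ ≤ |x| ^ k := by
            rw [norm_pow, Real.norm_eq_abs]
            exact pow_le_pow_left₀ (abs_nonneg t) (hsub t ht) k
          calc C * ‖t ^ k‖ ≤ |C| * ‖t ^ k‖ :=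
                mul_le_mul_of_nonneg_right (le_abs_self C) (norm_nonneg _)
            _ ≤ |C| * |x| ^ k := mul_le_mul_of_nonneg_left h2 (abs_nonneg C)
  rw [hf0, sub_zero, sub_zero] at key
  calc ‖f x‖ ≤ |C| * |x| ^ k * ‖x‖ := key
    _ = |C| * ‖x ^ (k+1)‖ := by rw [norm_pow, pow_succ, Real.norm_eq_abs]; ring

/-- The two-stage fourth-order method for dQ/dt = L(Q) has local truncation
error O(Δt⁵), where ∂ₜL(Q) := L'(Q)·L(Q). -/
theorem two_stage_fourth_order
    (L : ℝ → ℝ) (hL : ContDiff ℝ 5 L)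
    (Q : ℝ → ℝ) (hQ : ∀ t, HasDerivAt Q (L (Q t)) t)
    (tn : ℝ) :
    (fun Δt : ℝ =>
      (Q tn + Δt * L (Q tn)
        + Δt ^ 2 / 6 *
          (deriv L (Q tn) * L (Q tn)
            + 2 * (deriv L (Q tn + Δt / 2 * L (Q tn)
                    + Δt ^ 2 / 8 * (deriv L (Q tn) * L (Q tn)))
                  * L (Q tn + Δt / 2 * L (Q tn)
                    + Δt ^ 2 / 8 * (deriv L (Q tn) * L (Q tn))))))
        - Q (tn + Δt))
      =O[nhds 0] (fun Δt : ℝ => Δt ^ 5) := by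
  set D1 := deriv L with hD1def
  set D2 := deriv D1 with hD2def
  set D3 := deriv D2 with hD3def
  set D4 := deriv D3 with hD4def
  have h1 : ContDiff ℝ 4 D1 :=
    (contDiff_succ_iff_deriv.mp (show ContDiff ℝ (4+1) L from by norm_num; exact hL)).2.2
  have h2 : ContDiff ℝ 3 D2 :=
    (contDiff_succ_iff_deriv.mp (show ContDiff ℝ (3+1) D1 from by norm_num; exact h1)).2.2
  have h3 : ContDiff ℝ 2 D3 :=
    (contDiff_succ_iff_deriv.mp (show ContDiff ℝ (2+1) D2 from by norm_num; exact h2)).2.2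
  have h4 : ContDiff ℝ 1 D4 :=
    (contDiff_succ_iff_deriv.mp (show ContDiff ℝ (1+1) D3 from by norm_num; exact h3)).2.2
  have hdL : ∀ y, HasDerivAt L (D1 y) y :=
    fun y => (hL.differentiable (by norm_num)).differentiableAt.hasDerivAt
  have hd1 : ∀ y, HasDerivAt D1 (D2 y) y :=
    fun y => (h1.differentiable (by norm_num)).differentiableAt.hasDerivAt
  have hd2 : ∀ y, HasDerivAt D2 (D3 y) y :=
    fun y => (h2.differentiable (by norm_num)).differentiableAt.hasDerivAt
  have hd3 : ∀ y, HasDerivAt D3 (D4 y) y :=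
    fun y => (h3.differentiable (by norm_num)).differentiableAt.hasDerivAt
  have hcL : Continuous L := hL.continuous
  have hcD1 : Continuous D1 := h1.continuous
  have hcD2 : Continuous D2 := h2.continuous
  have hcD3 : Continuous D3 := h3.continuous
  have hcD4 : Continuous D4 := h4.continuous
  have hdQ : Differentiable ℝ Q := fun t => (hQ t).differentiableAt
  have hcQ : Continuous Q := hdQ.continuous
  -- constants
  set a := Q tn with ha
  set c := L a with hc
  set p0 := D1 a * c with hp0
  set p1 := (D2 a * c + (D1 a)^2) * (c/2) with hp1
  set p2 := (D3 a * c + 3 * D2 a * D1 a) * (c^2/4) + (D2 a * c + (D1 a)^2) * (p0/4) with hp2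
  -- the intermediate stage and its derivative
  set q : ℝ → ℝ := fun t => a + t / 2 * c + t ^ 2 / 8 * p0 with hqdef
  set w : ℝ → ℝ := fun t => c/2 + t/4 * p0 with hwdef
  have hq' : ∀ t, HasDerivAt q (w t) t := by
    intro t
    exact hd_congr (((hasDerivAt_const t a).add
        (((hasDerivAt_id t).div_const 2).mul_const c)).add
        (((hasDerivAt_pow 2 t).div_const 8).mul_const p0))
      (by simp only [hwdef]; push_cast; ring)
  have hw' : ∀ t, HasDerivAt w (p0/4) t := by
    intro t
    exact hd_congr ((hasDerivAt_const t (c/2)).add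
        (((hasDerivAt_id t).div_const 4).mul_const p0)) (by ring)
  have hq0 : q 0 = a := by simp only [hqdef]; norm_num
  have hw0 : w 0 = c / 2 := by simp only [hwdef]; norm_num
  -- derivative functions of the exact solution
  set g1 : ℝ → ℝ := fun s => L (Q s) with hg1def
  set g2 : ℝ → ℝ := fun s => D1 (Q s) * L (Q s) with hg2def
  set g3 : ℝ → ℝ := fun s => D2 (Q s) * (L (Q s))^2 + (D1 (Q s))^2 * L (Q s) with hg3def
  set g4 : ℝ → ℝ := fun s => D3 (Q s) * (L (Q s))^3 + 4 * (D2 (Q s) * D1 (Q s)) * (L (Q s))^2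
      + (D1 (Q s))^3 * L (Q s) with hg4def
  set g5 : ℝ → ℝ := fun s => D4 (Q s) * (L (Q s))^4 + 7 * (D3 (Q s) * D1 (Q s)) * (L (Q s))^3
      + 4 * (D2 (Q s))^2 * (L (Q s))^3 + 11 * (D2 (Q s) * (D1 (Q s))^2) * (L (Q s))^2
      + (D1 (Q s))^4 * L (Q s) with hg5def
  have hLQ : ∀ s, HasDerivAt (fun s => L (Q s)) (D1 (Q s) * L (Q s)) s :=
    fun s => (hdL (Q s)).comp s (hQ s)
  have hD1Q : ∀ s, HasDerivAt (fun s => D1 (Q s)) (D2 (Q s) * L (Q s)) s :=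
    fun s => (hd1 (Q s)).comp s (hQ s)
  have hD2Q : ∀ s, HasDerivAt (fun s => D2 (Q s)) (D3 (Q s) * L (Q s)) s :=
    fun s => (hd2 (Q s)).comp s (hQ s)
  have hD3Q : ∀ s, HasDerivAt (fun s => D3 (Q s)) (D4 (Q s) * L (Q s)) s :=
    fun s => (hd3 (Q s)).comp s (hQ s)
  have hg1' : ∀ s, HasDerivAt g1 (g2 s) s := fun s => hLQ s
  have hg2' : ∀ s, HasDerivAt g2 (g3 s) s := fun s =>
    hd_congr ((hD1Q s).mul (hLQ s)) (by simp only [hg3def]; ring)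
  have hg3' : ∀ s, HasDerivAt g3 (g4 s) s := fun s =>
    hd_congr (((hD2Q s).mul ((hLQ s).pow 2)).add (((hD1Q s).pow 2).mul (hLQ s)))
      (by simp only [hg4def]; push_cast; simp only [Pi.pow_apply, Pi.mul_apply, Pi.add_apply]; ring)
  have hg4' : ∀ s, HasDerivAt g4 (g5 s) s := fun s =>
    hd_congr ((((hD3Q s).mul ((hLQ s).pow 3)).add
        ((((hD2Q s).mul (hD1Q s)).const_mul 4).mul ((hLQ s).pow 2))).add
        (((hD1Q s).pow 3).mul (hLQ s)))
      (by simp only [hg5def]; push_cast; simp only [Pi.pow_apply, Pi.mul_apply, Pi.add_apply]; ring)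
  -- derivative functions of the stage value
  set ps1 : ℝ → ℝ := fun t => D1 (q t) * L (q t) with hps1def
  set ps2 : ℝ → ℝ := fun t => (D2 (q t) * L (q t) + (D1 (q t))^2) * w t with hps2def
  set ps3 : ℝ → ℝ := fun t => (D3 (q t) * L (q t) + 3 * (D2 (q t) * D1 (q t))) * (w t)^2
      + (D2 (q t) * L (q t) + (D1 (q t))^2) * (p0/4) with hps3def
  set ps4 : ℝ → ℝ := fun t => (D4 (q t) * L (q t) + 4 * (D3 (q t) * D1 (q t))
        + 3 * (D2 (q t))^2) * (w t)^3
      + 3 * ((D3 (q t) * L (q t) + 3 * (D2 (q t) * D1 (q t))) * w t) * (p0/4) with hps4def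
  have hLq : ∀ t, HasDerivAt (fun t => L (q t)) (D1 (q t) * w t) t :=
    fun t => (hdL (q t)).comp t (hq' t)
  have hD1q : ∀ t, HasDerivAt (fun t => D1 (q t)) (D2 (q t) * w t) t :=
    fun t => (hd1 (q t)).comp t (hq' t)
  have hD2q : ∀ t, HasDerivAt (fun t => D2 (q t)) (D3 (q t) * w t) t :=
    fun t => (hd2 (q t)).comp t (hq' t)
  have hD3q : ∀ t, HasDerivAt (fun t => D3 (q t)) (D4 (q t) * w t) t :=
    fun t => (hd3 (q t)).comp t (hq' t)
  have hps1' : ∀ t, HasDerivAt ps1 (ps2 t) t := fun t =>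
    hd_congr ((hD1q t).mul (hLq t)) (by simp only [hps2def]; ring)
  have hps2' : ∀ t, HasDerivAt ps2 (ps3 t) t := fun t =>
    hd_congr ((((hD2q t).mul (hLq t)).add ((hD1q t).pow 2)).mul (hw' t))
      (by simp only [hps3def]; push_cast; simp only [Pi.pow_apply, Pi.mul_apply, Pi.add_apply]; ring)
  have hps3' : ∀ t, HasDerivAt ps3 (ps4 t) t := fun t =>
    hd_congr (((((hD3q t).mul (hLq t)).add (((hD2q t).mul (hD1q t)).const_mul 3)).mul
        ((hw' t).pow 2)).add
        ((((hD2q t).mul (hLq t)).add ((hD1q t).pow 2)).mul_const (p0/4)))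
      (by simp only [hps4def]; push_cast; simp only [Pi.pow_apply, Pi.mul_apply, Pi.add_apply]; ring)
  -- the residual chain for the stage part
  set R0 : ℝ → ℝ := fun t => ps1 t - p0 - p1 * t - p2/2 * t^2 with hR0def
  set R1 : ℝ → ℝ := fun t => ps2 t - p1 - p2 * t with hR1def
  set R2 : ℝ → ℝ := fun t => ps3 t - p2 with hR2def
  have hR0' : ∀ t, HasDerivAt R0 (R1 t) t := fun t =>
    hd_congr ((((hps1' t).sub (hasDerivAt_const t p0)).sub
        ((hasDerivAt_id t).const_mul p1)).sub
        ((hasDerivAt_pow 2 t).const_mul (p2/2)))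
      (by simp only [hR1def]; push_cast; ring)
  have hR1' : ∀ t, HasDerivAt R1 (R2 t) t := fun t =>
    hd_congr (((hps2' t).sub (hasDerivAt_const t p1)).sub ((hasDerivAt_id t).const_mul p2))
      (by simp only [hR2def]; ring)
  have hR2' : ∀ t, HasDerivAt R2 (ps4 t) t := fun t =>
    hd_congr ((hps3' t).sub (hasDerivAt_const t p2)) (by ring)
  have hR00 : R0 0 = 0 := by
    simp only [hR0def, hps1def, hq0]
    rw [hp0]; ring
  have hR10 : R1 0 = 0 := by
    simp only [hR1def, hps2def, hq0, hw0]
    rw [hp1]; ring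
  have hR20 : R2 0 = 0 := by
    simp only [hR2def, hps3def, hq0, hw0]
    rw [hp2, hp0]; ring
  have hcq : Continuous q := by simp only [hqdef]; fun_prop
  have hcw : Continuous w := by simp only [hwdef]; fun_prop
  have hps4c : Continuous ps4 := by
    simp only [hps4def]
    exact ((((hcD4.comp hcq).mul (hcL.comp hcq)).add
        (continuous_const.mul ((hcD3.comp hcq).mul (hcD1.comp hcq)))).add
        (continuous_const.mul ((hcD2.comp hcq).pow 2))).mul (hcw.pow 3) |>.add
      ((continuous_const.mul ((((hcD3.comp hcq).mul (hcL.comp hcq)).add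
        (continuous_const.mul ((hcD2.comp hcq).mul (hcD1.comp hcq)))).mul hcw)).mul
        continuous_const)
  have hO0 : ps4 =O[nhds 0] (fun x : ℝ => x ^ 0) := by
    simp only [pow_zero]
    exact (hps4c.tendsto 0).isBigO_one ℝ
  have hO1 : R2 =O[nhds 0] (fun x : ℝ => x ^ (0+1)) :=
    isBigO_succ_of_hasDerivAt hR2' hR20 hO0
  have hO2 : R1 =O[nhds 0] (fun x : ℝ => x ^ (1+1)) :=
    isBigO_succ_of_hasDerivAt hR1' hR10 hO1
  have hO3 : R0 =O[nhds 0] (fun x : ℝ => x ^ (2+1)) :=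
    isBigO_succ_of_hasDerivAt hR0' hR00 hO2
  -- the smooth chain
  set F0 : ℝ → ℝ := fun t => a + t * c + p0/2 * t^2 + p1/3 * t^3 + p2/6 * t^4 - Q (tn + t)
    with hF0def
  set F1 : ℝ → ℝ := fun t => c + p0 * t + p1 * t^2 + 2*p2/3 * t^3 - g1 (tn + t) with hF1def
  set F2 : ℝ → ℝ := fun t => p0 + 2 * p1 * t + 2*p2 * t^2 - g2 (tn + t) with hF2def
  set F3 : ℝ → ℝ := fun t => 2 * p1 + 4*p2 * t - g3 (tn + t) with hF3def
  set F4 : ℝ → ℝ := fun t => 4 * p2 - g4 (tn + t) with hF4def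
  set F5 : ℝ → ℝ := fun t => 0 - g5 (tn + t) with hF5def
  have hshift : ∀ x : ℝ, HasDerivAt (fun t : ℝ => tn + t) 1 x := fun x => by
    simpa using (hasDerivAt_id x).const_add tn
  have hQs : ∀ x, HasDerivAt (fun t => Q (tn + t)) (g1 (tn + x)) x := fun x =>
    hd_congr ((hQ (tn + x)).comp x (hshift x)) (by simp only [hg1def]; ring)
  have hg1s : ∀ x, HasDerivAt (fun t => g1 (tn + t)) (g2 (tn + x)) x := fun x =>
    hd_congr ((hg1' (tn + x)).comp x (hshift x)) (by ring)
  have hg2s : ∀ x, HasDerivAt (fun t => g2 (tn + t)) (g3 (tn + x)) x := fun x =>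
    hd_congr ((hg2' (tn + x)).comp x (hshift x)) (by ring)
  have hg3s : ∀ x, HasDerivAt (fun t => g3 (tn + t)) (g4 (tn + x)) x := fun x =>
    hd_congr ((hg3' (tn + x)).comp x (hshift x)) (by ring)
  have hg4s : ∀ x, HasDerivAt (fun t => g4 (tn + t)) (g5 (tn + x)) x := fun x =>
    hd_congr ((hg4' (tn + x)).comp x (hshift x)) (by ring)
  have hF0' : ∀ x, HasDerivAt F0 (F1 x) x := fun x =>
    hd_congr ((((((hasDerivAt_const x a).add ((hasDerivAt_id x).mul_const c)).add
        ((hasDerivAt_pow 2 x).const_mul (p0/2))).add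
        ((hasDerivAt_pow 3 x).const_mul (p1/3))).add
        ((hasDerivAt_pow 4 x).const_mul (p2/6))).sub (hQs x))
      (by simp only [hF1def]; push_cast; ring)
  have hF1' : ∀ x, HasDerivAt F1 (F2 x) x := fun x =>
    hd_congr (((((hasDerivAt_const x c).add ((hasDerivAt_id x).const_mul p0)).add
        ((hasDerivAt_pow 2 x).const_mul p1)).add
        ((hasDerivAt_pow 3 x).const_mul (2*p2/3))).sub (hg1s x))
      (by simp only [hF2def]; push_cast; ring)
  have hF2' : ∀ x, HasDerivAt F2 (F3 x) x := fun x =>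
    hd_congr ((((hasDerivAt_const x p0).add ((hasDerivAt_id x).const_mul (2*p1))).add
        ((hasDerivAt_pow 2 x).const_mul (2*p2))).sub (hg2s x))
      (by simp only [hF3def]; push_cast; ring)
  have hF3' : ∀ x, HasDerivAt F3 (F4 x) x := fun x =>
    hd_congr (((hasDerivAt_const x (2*p1)).add ((hasDerivAt_id x).const_mul (4*p2))).sub
        (hg3s x))
      (by simp only [hF4def]; ring)
  have hF4' : ∀ x, HasDerivAt F4 (F5 x) x := fun x =>
    hd_congr ((hasDerivAt_const x (4*p2)).sub (hg4s x)) (by simp only [hF5def]; try ring)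
  have hQtn : Q (tn + 0) = a := by rw [add_zero, ha]
  have hF00 : F0 0 = 0 := by simp only [hF0def]; norm_num [hQtn]; rw [ha, sub_self]
  have hF10 : F1 0 = 0 := by
    simp only [hF1def, hg1def, add_zero]
    rw [← ha, ← hc]; ring
  have hF20 : F2 0 = 0 := by
    simp only [hF2def, hg2def, add_zero]
    rw [← ha, ← hc, hp0]; ring
  have hF30 : F3 0 = 0 := by
    simp only [hF3def, hg3def, add_zero]
    rw [← ha, ← hc, hp1]; ring
  have hF40 : F4 0 = 0 := by
    simp only [hF4def, hg4def, add_zero]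
    rw [← ha, ← hc, hp2, hp0]; ring
  have hcsh : Continuous fun t : ℝ => tn + t := by fun_prop
  have hF5c : Continuous F5 := by
    simp only [hF5def, hg5def]
    have hQs : Continuous fun t : ℝ => Q (tn + t) := hcQ.comp hcsh
    exact continuous_const.sub
      (((((hcD4.comp hQs).mul ((hcL.comp hQs).pow 4)).add
        ((continuous_const.mul ((hcD3.comp hQs).mul (hcD1.comp hQs))).mul ((hcL.comp hQs).pow 3))).add
        ((continuous_const.mul ((hcD2.comp hQs).pow 2)).mul ((hcL.comp hQs).pow 3))).add
        ((continuous_const.mul ((hcD2.comp hQs).mul ((hcD1.comp hQs).pow 2))).mul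
          ((hcL.comp hQs).pow 2)) |>.add
        (((hcD1.comp hQs).pow 4).mul (hcL.comp hQs)))
  have hP0 : F5 =O[nhds 0] (fun x : ℝ => x ^ 0) := by
    simp only [pow_zero]
    exact (hF5c.tendsto 0).isBigO_one ℝ
  have hP1 : F4 =O[nhds 0] (fun x : ℝ => x ^ (0+1)) :=
    isBigO_succ_of_hasDerivAt hF4' hF40 hP0
  have hP2 : F3 =O[nhds 0] (fun x : ℝ => x ^ (1+1)) :=
    isBigO_succ_of_hasDerivAt hF3' hF30 hP1
  have hP3 : F2 =O[nhds 0] (fun x : ℝ => x ^ (2+1)) :=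
    isBigO_succ_of_hasDerivAt hF2' hF20 hP2
  have hP4 : F1 =O[nhds 0] (fun x : ℝ => x ^ (3+1)) :=
    isBigO_succ_of_hasDerivAt hF1' hF10 hP3
  have hP5 : F0 =O[nhds 0] (fun x : ℝ => x ^ (4+1)) :=
    isBigO_succ_of_hasDerivAt hF0' hF00 hP4
  -- assemble
  have hQuad : (fun t : ℝ => t^2/3 * R0 t) =O[nhds 0] (fun t : ℝ => t ^ 5) := by
    have h := ((isBigO_refl (fun t : ℝ => t^2) (nhds 0)).mul hO3).const_mul_left (1/3 : ℝ)
    have he1 : (fun t : ℝ => (1/3 : ℝ) * ((fun t : ℝ => t^2) t * R0 t))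
        = fun t : ℝ => t^2/3 * R0 t := by funext t; ring
    have he2 : (fun t : ℝ => (fun t : ℝ => t^2) t * t ^ (2+1)) = fun t : ℝ => t ^ 5 := by
      funext t; ring
    rw [he1, he2] at h
    exact h
  have hSum : (fun t : ℝ => F0 t + t^2/3 * R0 t) =O[nhds 0] (fun t : ℝ => t ^ 5) := by
    have h := hP5.add hQuad
    have he : (fun x : ℝ => x ^ (4+1)) = fun x : ℝ => x ^ 5 := by norm_num
    rw [he] at h
    exact h
  refine hSum.congr' (Filter.Eventually.of_forall fun t => ?_) Filter.EventuallyEq.rfl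
  simp only [hF0def, hR0def, hps1def, hqdef]
  ring
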